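/- Let M be a paving matroid of rank r on a ground set E of size m, let e, f ∈ E be distinct, and let B_{¬e¬f} and B_{¬ef} denote the sets of bases containing neither e nor f, and containing f but not e, respectively. Then (r − 1)·|B_{¬e¬f}| ≤ (m − r − 1)·|B_{¬ef}|. -/

import Mathlib

open scoped symmDiff

variable {α : Type*} [DecidableEq α]

/-- `B` is the collection of bases of a matroid of rank `r` on ground set `E`. -/
def MatroidBases (E : Finset α) (r : ℕ) (B : Finset (Finset α)) : Prop :=
  B.Nonempty ∧ (∀ X ∈ B, X ⊆ E ∧ X.card = r) ∧
    ∀ X ∈ B, ∀ Y ∈ B, ∀ e ∈ X, ∃ f ∈ Y, insert f (X.erase e) ∈ B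

/-- A set is independent if it is contained in some basis. -/
def Indep (B : Finset (Finset α)) (X : Finset α) : Prop := ∃ Y ∈ B, X ⊆ Y

/-- A circuit is a minimal dependent subset of the ground set. -/
def Circuit (E : Finset α) (B : Finset (Finset α)) (C : Finset α) : Prop :=
  C ⊆ E ∧ ¬ Indep B C ∧ ∀ x ∈ C, Indep B (C.erase x)

/-- A paving matroid of rank `r`: every `(r-1)`-element subset of the ground set is independent. -/
def IsPaving (E : Finset α) (r : ℕ) (B : Finset (Finset α)) : Prop :=
  MatroidBases E r B ∧ ∀ X ⊆ E, X.card = r - 1 → Indep B X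

/-- A sparse paving matroid: a paving matroid in which any two distinct circuits of size `r`
have symmetric difference of size greater than 2. -/
def IsSparsePaving (E : Finset α) (r : ℕ) (B : Finset (Finset α)) : Prop :=
  IsPaving E r B ∧ ∀ C C' : Finset α, Circuit E B C → Circuit E B C' → C.card = r →
    C'.card = r → C ≠ C' → 2 < (C ∆ C').card

lemma bad_card_le_one (E : Finset α) (r : ℕ) (B : Finset (Finset α))
    (hM : IsPaving E r B) (X : Finset α) (hX : X ∈ B) (f : α) (hfE : f ∈ E) (hfX : f ∉ X) :
    (X.filter (fun g => insert f (X.erase g) ∉ B)).card ≤ 1 := by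
  rw [Finset.card_le_one]
  intro g1 h1 g2 h2
  by_contra hne
  simp only [Finset.mem_filter] at h1 h2
  obtain ⟨hg1X, hbad1⟩ := h1
  obtain ⟨hg2X, hbad2⟩ := h2
  obtain ⟨⟨hBne, hcard, hexch⟩, hpav⟩ := hM
  have hXE := (hcard X hX).1
  have hXr := (hcard X hX).2
  have hg2e : g2 ∈ X.erase g1 := Finset.mem_erase.2 ⟨fun h => hne h.symm, hg2X⟩
  have hr2 : 2 ≤ r := by
    have hsub : ({g1, g2} : Finset α) ⊆ X := by
      intro a ha
      rcases Finset.mem_insert.1 ha with h | h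
      · exact h ▸ hg1X
      · exact (Finset.mem_singleton.1 h) ▸ hg2X
    have := Finset.card_le_card hsub
    rwa [Finset.card_pair hne, hXr] at this
  set T := insert f ((X.erase g1).erase g2) with hT
  have hfT : f ∉ (X.erase g1).erase g2 :=
    fun h => hfX (Finset.mem_of_mem_erase (Finset.mem_of_mem_erase h))
  have hTcard : T.card = r - 1 := by
    rw [hT, Finset.card_insert_of_notMem hfT, Finset.card_erase_of_mem hg2e,
      Finset.card_erase_of_mem hg1X, hXr]
    omega
  have hTE : T ⊆ E := by
    intro a ha
    rcases Finset.mem_insert.1 ha with h | h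
    · exact h ▸ hfE
    · exact hXE (Finset.mem_of_mem_erase (Finset.mem_of_mem_erase h))
  obtain ⟨Z, hZB, hTZ⟩ := hpav T hTE hTcard
  have hZr := (hcard Z hZB).2
  have hZTne : (Z \ T).Nonempty := by
    rw [← Finset.card_pos, Finset.card_sdiff_of_subset hTZ, hZr, hTcard]
    omega
  obtain ⟨z, hz⟩ := hZTne
  have hzZ : z ∈ Z := (Finset.mem_sdiff.1 hz).1
  have hzT : z ∉ T := (Finset.mem_sdiff.1 hz).2
  have hZeT : Z.erase z = T := by
    apply (Finset.eq_of_subset_of_card_le _ _).symm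
    · intro a ha
      exact Finset.mem_erase.2 ⟨fun h => hzT (h ▸ ha), hTZ ha⟩
    · rw [Finset.card_erase_of_mem hzZ, hZr, hTcard]
  obtain ⟨x, hxX, hxB⟩ := hexch Z hZB X hX z hzZ
  rw [hZeT] at hxB
  by_cases hx1 : x = g1
  · apply hbad2
    have heq : insert g1 T = insert f (X.erase g2) := by
      ext a
      simp only [hT, Finset.mem_insert, Finset.mem_erase]
      constructor
      · rintro (h | h | ⟨h1, h2, h3⟩)
        · exact Or.inr ⟨fun hc => hne (h ▸ hc : g1 = g2), h ▸ hg1X⟩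
        · exact Or.inl h
        · exact Or.inr ⟨h1, h3⟩
      · rintro (h | ⟨h1, h2⟩)
        · exact Or.inr (Or.inl h)
        · by_cases hag : a = g1
          · exact Or.inl hag
          · exact Or.inr (Or.inr ⟨h1, hag, h2⟩)
    rw [hx1] at hxB
    rwa [heq] at hxB
  by_cases hx2 : x = g2
  · apply hbad1
    have heq : insert g2 T = insert f (X.erase g1) := by
      ext a
      simp only [hT, Finset.mem_insert, Finset.mem_erase]
      constructor
      · rintro (h | h | ⟨h1, h2, h3⟩)
        · exact Or.inr ⟨fun hc => hne ((h ▸ hc : g2 = g1)).symm, h ▸ hg2X⟩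
        · exact Or.inl h
        · exact Or.inr ⟨h2, h3⟩
      · rintro (h | ⟨h1, h2⟩)
        · exact Or.inr (Or.inl h)
        · by_cases hag : a = g2
          · exact Or.inl hag
          · exact Or.inr (Or.inr ⟨hag, h1, h2⟩)
    rw [hx2] at hxB
    rwa [heq] at hxB
  · have hxT : x ∈ T := by
      rw [hT]
      exact Finset.mem_insert.2 (Or.inr (Finset.mem_erase.2 ⟨hx2, Finset.mem_erase.2 ⟨hx1, hxX⟩⟩))
    rw [Finset.insert_eq_self.2 hxT] at hxB
    have := (hcard T hxB).2
    omega

/-- In a paving matroid of rank `r` on a ground set of size `m`, for distinct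
`e, f ∈ E`: `(r - 1)·|B_{¬e¬f}| ≤ (m - r - 1)·|B_{¬ef}|`. -/
theorem stmt5 (E : Finset α) (r m : ℕ) (B : Finset (Finset α))
    (hM : IsPaving E r B) (hm : E.card = m)
    (e f : α) (he : e ∈ E) (hf : f ∈ E) (hef : e ≠ f) :
    (r - 1) * (B.filter (fun X => e ∉ X ∧ f ∉ X)).card ≤
      (m - r - 1) * (B.filter (fun X => e ∉ X ∧ f ∈ X)).card := by
  classical
  obtain ⟨⟨hBne, hcard, hexch⟩, hpav⟩ := id hM
  set B1 := B.filter (fun X => e ∉ X ∧ f ∉ X) with hB1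
  set B2 := B.filter (fun X => e ∉ X ∧ f ∈ X) with hB2
  have key : ∑ X ∈ B1, (B2.filter (fun Y => (X \ Y).card = 1)).card
           = ∑ Y ∈ B2, (B1.filter (fun X => (X \ Y).card = 1)).card := by
    simp_rw [Finset.card_filter]
    exact Finset.sum_comm
  have lower : ∀ X ∈ B1, r - 1 ≤ (B2.filter (fun Y => (X \ Y).card = 1)).card := by
    intro X hX1
    rw [hB1, Finset.mem_filter] at hX1
    obtain ⟨hXB, heX, hfX⟩ := hX1
    have hXE := (hcard X hXB).1
    have hXr := (hcard X hXB).2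
    have hbad := bad_card_le_one E r B hM X hXB f hf hfX
    set G := X.filter (fun g => insert f (X.erase g) ∈ B) with hG
    have hGcard : r - 1 ≤ G.card := by
      have hle : X.card ≤ G.card + (X.filter (fun g => insert f (X.erase g) ∉ B)).card := by
        have hsub : X ⊆ G ∪ X.filter (fun g => insert f (X.erase g) ∉ B) := by
          intro a ha
          by_cases hb : insert f (X.erase a) ∈ B
          · exact Finset.mem_union_left _ (Finset.mem_filter.2 ⟨ha, hb⟩)
          · exact Finset.mem_union_right _ (Finset.mem_filter.2 ⟨ha, hb⟩)
        exact (Finset.card_le_card hsub).trans (Finset.card_union_le _ _)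
      omega
    have hsd : ∀ g ∈ G, X \ insert f (X.erase g) = {g} := by
      intro g hg
      have hgX : g ∈ X := (Finset.mem_filter.1 hg).1
      ext a
      simp only [Finset.mem_sdiff, Finset.mem_insert, Finset.mem_erase, Finset.mem_singleton]
      constructor
      · rintro ⟨haX, hna⟩
        push_neg at hna
        by_contra hag
        exact (hna.2 hag) haX
      · rintro rfl
        refine ⟨hgX, ?_⟩
        push_neg
        exact ⟨fun h => hfX (h ▸ hgX), fun h => absurd rfl h⟩
    calc r - 1 ≤ G.card := hGcard
      _ ≤ _ := by
        apply Finset.card_le_card_of_injOn (fun g => insert f (X.erase g))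
        · intro g hg
          have hgX : g ∈ X := (Finset.mem_filter.1 hg).1
          have hgB : insert f (X.erase g) ∈ B := (Finset.mem_filter.1 hg).2
          rw [Finset.mem_coe, Finset.mem_filter, hB2, Finset.mem_filter]
          refine ⟨⟨hgB, ?_, Finset.mem_insert_self _ _⟩, ?_⟩
          · intro hc
            rcases Finset.mem_insert.1 hc with h | h
            · exact hef h
            · exact heX (Finset.mem_of_mem_erase h)
          · rw [hsd g hg, Finset.card_singleton]
        · intro g1 h1 g2 h2 heq
          dsimp only at heq
          have : ({g1} : Finset α) = {g2} := by
            rw [← hsd g1 (Finset.mem_coe.1 h1), ← hsd g2 (Finset.mem_coe.1 h2), heq]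
          exact Finset.singleton_injective this
  have upper : ∀ Y ∈ B2, (B1.filter (fun X => (X \ Y).card = 1)).card ≤ m - r - 1 := by
    intro Y hY2
    rw [hB2, Finset.mem_filter] at hY2
    obtain ⟨hYB, heY, hfY⟩ := hY2
    have hYE := (hcard Y hYB).1
    have hYr := (hcard Y hYB).2
    have hsubimg : B1.filter (fun X => (X \ Y).card = 1) ⊆
        (E \ insert e Y).image (fun g => insert g (Y.erase f)) := by
      intro X hX
      rw [Finset.mem_filter, hB1, Finset.mem_filter] at hX
      obtain ⟨⟨hXB, heX, hfX⟩, hXY1⟩ := hX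
      have hXE := (hcard X hXB).1
      have hXr := (hcard X hXB).2
      obtain ⟨g, hg⟩ := Finset.card_eq_one.1 hXY1
      have hgX : g ∈ X := by
        have : g ∈ X \ Y := hg ▸ Finset.mem_singleton_self g
        exact (Finset.mem_sdiff.1 this).1
      have hgY : g ∉ Y := by
        have : g ∈ X \ Y := hg ▸ Finset.mem_singleton_self g
        exact (Finset.mem_sdiff.1 this).2
      have hYX1 : (Y \ X).card = 1 := by
        rw [Finset.card_sdiff_comm (by rw [hYr, hXr])]
        exact hXY1
      have hYXf : Y \ X = {f} := by
        obtain ⟨b, hb⟩ := Finset.card_eq_one.1 hYX1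
        have : f ∈ Y \ X := Finset.mem_sdiff.2 ⟨hfY, hfX⟩
        rw [hb] at this ⊢
        rw [Finset.mem_singleton.1 this]
      have hXeq : X = insert g (Y.erase f) := by
        ext a
        simp only [Finset.mem_insert, Finset.mem_erase]
        constructor
        · intro haX
          by_cases haY : a ∈ Y
          · exact Or.inr ⟨fun h => hfX (h ▸ haX), haY⟩
          · have : a ∈ X \ Y := Finset.mem_sdiff.2 ⟨haX, haY⟩
            rw [hg] at this
            exact Or.inl (Finset.mem_singleton.1 this)
        · rintro (rfl | ⟨haf, haY⟩)
          · exact hgX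
          · by_contra haX
            have : a ∈ Y \ X := Finset.mem_sdiff.2 ⟨haY, haX⟩
            rw [hYXf] at this
            exact haf (Finset.mem_singleton.1 this)
      apply Finset.mem_image.2
      refine ⟨g, ?_, hXeq.symm⟩
      apply Finset.mem_sdiff.2
      refine ⟨hXE hgX, ?_⟩
      intro hc
      rcases Finset.mem_insert.1 hc with h | h
      · exact heX (h ▸ hgX)
      · exact hgY h
    calc (B1.filter (fun X => (X \ Y).card = 1)).card
        ≤ ((E \ insert e Y).image (fun g => insert g (Y.erase f))).card :=
          Finset.card_le_card hsubimg
      _ ≤ (E \ insert e Y).card := Finset.card_image_le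
      _ = m - r - 1 := by
          rw [Finset.card_sdiff_of_subset, Finset.card_insert_of_notMem heY, hYr, hm]
          · omega
          · intro a ha
            rcases Finset.mem_insert.1 ha with h | h
            · exact h ▸ he
            · exact hYE h
  calc (r - 1) * B1.card = ∑ _X ∈ B1, (r - 1) := by
        rw [Finset.sum_const, smul_eq_mul, mul_comm]
    _ ≤ ∑ X ∈ B1, (B2.filter (fun Y => (X \ Y).card = 1)).card :=
        Finset.sum_le_sum lower
    _ = ∑ Y ∈ B2, (B1.filter (fun X => (X \ Y).card = 1)).card := key
    _ ≤ ∑ _Y ∈ B2, (m - r - 1) := Finset.sum_le_sum upper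
    _ = (m - r - 1) * B2.card := by rw [Finset.sum_const, smul_eq_mul, mul_comm]
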